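/- arXiv:1410.0072 — 4 statements merged into one kernel-verified Lean document; each statement's English description precedes it below -/
import Mathlib

section
/- The additive monoid P₃ is generated by the following 12 elements: for each pair 1 ≤ i < j ≤ 3 and each choice of s ∈ {x,y} at index i and t ∈ {x,y} at index j, the element of ℕ⁶ whose s-coordinate at index i is 1, whose t-coordinate at index j is 1, and whose other four coordinates are 0. (These are the generators X₍ᵢ,ₛ₎,₍ⱼ,ₜ₎ of the affine semigroup P₃, whose semigroup algebra is ℂ[M₃(SL₂(ℂ)ᶜ)].) -/
/-- The affine semigroup P₃ ⊂ ℕ⁶ of tuples (x₁,y₁,x₂,y₂,x₃,y₃) (coordinates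
v 0, …, v 5) such that, with a = x₁+y₁, b = x₂+y₂, c = x₃+y₃, the sum a+b+c is
even and a, b, c satisfy the triangle inequalities. -/
def P3 : AddSubmonoid (Fin 6 → ℕ) where
  carrier := {v | Even ((v 0 + v 1) + (v 2 + v 3) + (v 4 + v 5)) ∧
      v 0 + v 1 ≤ (v 2 + v 3) + (v 4 + v 5) ∧
      v 2 + v 3 ≤ (v 0 + v 1) + (v 4 + v 5) ∧
      v 4 + v 5 ≤ (v 0 + v 1) + (v 2 + v 3)}
  zero_mem' := by
    refine ⟨?_, ?_, ?_, ?_⟩ <;> simp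
  add_mem' := by
    intro x y hx hy
    obtain ⟨⟨px, hpx⟩, hx2, hx3, hx4⟩ := hx
    obtain ⟨⟨py, hpy⟩, hy2, hy3, hy4⟩ := hy
    refine ⟨⟨px + py, ?_⟩, ?_, ?_, ?_⟩ <;> simp only [Pi.add_apply] <;> omega

/-- The 12 generators X₍ᵢ,ₛ₎,₍ⱼ,ₜ₎ for 1 ≤ i < j ≤ 3 and s, t ∈ {x,y}: the tuple
with a 1 in the s-coordinate at index i and a 1 in the t-coordinate at index j
(coordinate (i,s) sits at position 2i+s of Fin 6) and 0 elsewhere. -/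
def pairGens : Set (Fin 6 → ℕ) :=
  {v | ∃ (i j : Fin 3) (s t : Fin 2), i < j ∧
      v = Pi.single (⟨2 * i.val + s.val, by have := i.2; have := s.2; omega⟩ : Fin 6) 1
        + Pi.single (⟨2 * j.val + t.val, by have := j.2; have := t.2; omega⟩ : Fin 6) 1}

lemma vec6_0 {α : Type*} (a b c d e f : α) : ![a,b,c,d,e,f] 0 = a := rfl
lemma vec6_1 {α : Type*} (a b c d e f : α) : ![a,b,c,d,e,f] 1 = b := rfl
lemma vec6_2 {α : Type*} (a b c d e f : α) : ![a,b,c,d,e,f] 2 = c := rfl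
lemma vec6_3 {α : Type*} (a b c d e f : α) : ![a,b,c,d,e,f] 3 = d := rfl
lemma vec6_4 {α : Type*} (a b c d e f : α) : ![a,b,c,d,e,f] 4 = e := rfl
lemma vec6_5 {α : Type*} (a b c d e f : α) : ![a,b,c,d,e,f] 5 = f := rfl

lemma step_aux (v g : Fin 6 → ℕ) (hg : g ∈ pairGens) (hle : ∀ k, g k ≤ v k)
    (hw : (fun k => v k - g k) ∈ AddSubmonoid.closure pairGens) :
    v ∈ AddSubmonoid.closure pairGens := by
  have hv : v = g + fun k => v k - g k :=
    funext fun k => (Nat.add_sub_cancel' (hle k)).symm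
  rw [hv]
  exact add_mem (AddSubmonoid.subset_closure hg) hw

lemma g1 : (![1,0,1,0,0,0] : Fin 6 → ℕ) ∈ pairGens := ⟨0,1,0,0, by decide, by decide⟩
lemma g2 : (![1,0,0,1,0,0] : Fin 6 → ℕ) ∈ pairGens := ⟨0,1,0,1, by decide, by decide⟩
lemma g3 : (![0,1,1,0,0,0] : Fin 6 → ℕ) ∈ pairGens := ⟨0,1,1,0, by decide, by decide⟩
lemma g4 : (![0,1,0,1,0,0] : Fin 6 → ℕ) ∈ pairGens := ⟨0,1,1,1, by decide, by decide⟩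
lemma g5 : (![1,0,0,0,1,0] : Fin 6 → ℕ) ∈ pairGens := ⟨0,2,0,0, by decide, by decide⟩
lemma g6 : (![1,0,0,0,0,1] : Fin 6 → ℕ) ∈ pairGens := ⟨0,2,0,1, by decide, by decide⟩
lemma g7 : (![0,1,0,0,1,0] : Fin 6 → ℕ) ∈ pairGens := ⟨0,2,1,0, by decide, by decide⟩
lemma g8 : (![0,1,0,0,0,1] : Fin 6 → ℕ) ∈ pairGens := ⟨0,2,1,1, by decide, by decide⟩
lemma g9 : (![0,0,1,0,1,0] : Fin 6 → ℕ) ∈ pairGens := ⟨1,2,0,0, by decide, by decide⟩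
lemma g10 : (![0,0,1,0,0,1] : Fin 6 → ℕ) ∈ pairGens := ⟨1,2,0,1, by decide, by decide⟩
lemma g11 : (![0,0,0,1,1,0] : Fin 6 → ℕ) ∈ pairGens := ⟨1,2,1,0, by decide, by decide⟩
lemma g12 : (![0,0,0,1,0,1] : Fin 6 → ℕ) ∈ pairGens := ⟨1,2,1,1, by decide, by decide⟩

lemma mem_closure_of_mem_P3 (n : ℕ) : ∀ v : Fin 6 → ℕ,
    v 0 + v 1 + v 2 + v 3 + v 4 + v 5 = n → v ∈ P3 →
    v ∈ AddSubmonoid.closure pairGens := by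
  induction n using Nat.strong_induction_on with
  | _ n ih =>
    intro v hsum hv
    obtain ⟨⟨p, hp⟩, h1, h2, h3⟩ := hv
    by_cases h0 : n = 0
    · have : v = 0 := by funext k; fin_cases k <;> simp [vec6_0, vec6_1, vec6_2, vec6_3, vec6_4, vec6_5] <;> omega
      rw [this]; exact zero_mem _
    by_cases hc : v 4 + v 5 ≤ v 0 + v 1 ∧ v 4 + v 5 ≤ v 2 + v 3
    · have ha : 1 ≤ v 0 + v 1 := by omega
      have hb : 1 ≤ v 2 + v 3 := by omega
      by_cases hs : 1 ≤ v 0 <;> by_cases ht : 1 ≤ v 2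
      · refine step_aux v _ g1 (fun k => by fin_cases k <;> simp [vec6_0, vec6_1, vec6_2, vec6_3, vec6_4, vec6_5] <;> omega)
          (ih (n - 2) (by omega) _ (by simp [vec6_0, vec6_1, vec6_2, vec6_3, vec6_4, vec6_5]; omega) ⟨⟨p - 1, by simp [vec6_0, vec6_1, vec6_2, vec6_3, vec6_4, vec6_5]; omega⟩, by simp [vec6_0, vec6_1, vec6_2, vec6_3, vec6_4, vec6_5]; omega, by simp [vec6_0, vec6_1, vec6_2, vec6_3, vec6_4, vec6_5]; omega, by simp [vec6_0, vec6_1, vec6_2, vec6_3, vec6_4, vec6_5]; omega⟩)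
      · refine step_aux v _ g2 (fun k => by fin_cases k <;> simp [vec6_0, vec6_1, vec6_2, vec6_3, vec6_4, vec6_5] <;> omega)
          (ih (n - 2) (by omega) _ (by simp [vec6_0, vec6_1, vec6_2, vec6_3, vec6_4, vec6_5]; omega) ⟨⟨p - 1, by simp [vec6_0, vec6_1, vec6_2, vec6_3, vec6_4, vec6_5]; omega⟩, by simp [vec6_0, vec6_1, vec6_2, vec6_3, vec6_4, vec6_5]; omega, by simp [vec6_0, vec6_1, vec6_2, vec6_3, vec6_4, vec6_5]; omega, by simp [vec6_0, vec6_1, vec6_2, vec6_3, vec6_4, vec6_5]; omega⟩)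
      · refine step_aux v _ g3 (fun k => by fin_cases k <;> simp [vec6_0, vec6_1, vec6_2, vec6_3, vec6_4, vec6_5] <;> omega)
          (ih (n - 2) (by omega) _ (by simp [vec6_0, vec6_1, vec6_2, vec6_3, vec6_4, vec6_5]; omega) ⟨⟨p - 1, by simp [vec6_0, vec6_1, vec6_2, vec6_3, vec6_4, vec6_5]; omega⟩, by simp [vec6_0, vec6_1, vec6_2, vec6_3, vec6_4, vec6_5]; omega, by simp [vec6_0, vec6_1, vec6_2, vec6_3, vec6_4, vec6_5]; omega, by simp [vec6_0, vec6_1, vec6_2, vec6_3, vec6_4, vec6_5]; omega⟩)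
      · refine step_aux v _ g4 (fun k => by fin_cases k <;> simp [vec6_0, vec6_1, vec6_2, vec6_3, vec6_4, vec6_5] <;> omega)
          (ih (n - 2) (by omega) _ (by simp [vec6_0, vec6_1, vec6_2, vec6_3, vec6_4, vec6_5]; omega) ⟨⟨p - 1, by simp [vec6_0, vec6_1, vec6_2, vec6_3, vec6_4, vec6_5]; omega⟩, by simp [vec6_0, vec6_1, vec6_2, vec6_3, vec6_4, vec6_5]; omega, by simp [vec6_0, vec6_1, vec6_2, vec6_3, vec6_4, vec6_5]; omega, by simp [vec6_0, vec6_1, vec6_2, vec6_3, vec6_4, vec6_5]; omega⟩)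
    by_cases hc2 : v 2 + v 3 ≤ v 0 + v 1 ∧ v 2 + v 3 ≤ v 4 + v 5
    · have ha : 1 ≤ v 0 + v 1 := by omega
      have hb : 1 ≤ v 4 + v 5 := by omega
      by_cases hs : 1 ≤ v 0 <;> by_cases ht : 1 ≤ v 4
      · refine step_aux v _ g5 (fun k => by fin_cases k <;> simp [vec6_0, vec6_1, vec6_2, vec6_3, vec6_4, vec6_5] <;> omega)
          (ih (n - 2) (by omega) _ (by simp [vec6_0, vec6_1, vec6_2, vec6_3, vec6_4, vec6_5]; omega) ⟨⟨p - 1, by simp [vec6_0, vec6_1, vec6_2, vec6_3, vec6_4, vec6_5]; omega⟩, by simp [vec6_0, vec6_1, vec6_2, vec6_3, vec6_4, vec6_5]; omega, by simp [vec6_0, vec6_1, vec6_2, vec6_3, vec6_4, vec6_5]; omega, by simp [vec6_0, vec6_1, vec6_2, vec6_3, vec6_4, vec6_5]; omega⟩)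
      · refine step_aux v _ g6 (fun k => by fin_cases k <;> simp [vec6_0, vec6_1, vec6_2, vec6_3, vec6_4, vec6_5] <;> omega)
          (ih (n - 2) (by omega) _ (by simp [vec6_0, vec6_1, vec6_2, vec6_3, vec6_4, vec6_5]; omega) ⟨⟨p - 1, by simp [vec6_0, vec6_1, vec6_2, vec6_3, vec6_4, vec6_5]; omega⟩, by simp [vec6_0, vec6_1, vec6_2, vec6_3, vec6_4, vec6_5]; omega, by simp [vec6_0, vec6_1, vec6_2, vec6_3, vec6_4, vec6_5]; omega, by simp [vec6_0, vec6_1, vec6_2, vec6_3, vec6_4, vec6_5]; omega⟩)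
      · refine step_aux v _ g7 (fun k => by fin_cases k <;> simp [vec6_0, vec6_1, vec6_2, vec6_3, vec6_4, vec6_5] <;> omega)
          (ih (n - 2) (by omega) _ (by simp [vec6_0, vec6_1, vec6_2, vec6_3, vec6_4, vec6_5]; omega) ⟨⟨p - 1, by simp [vec6_0, vec6_1, vec6_2, vec6_3, vec6_4, vec6_5]; omega⟩, by simp [vec6_0, vec6_1, vec6_2, vec6_3, vec6_4, vec6_5]; omega, by simp [vec6_0, vec6_1, vec6_2, vec6_3, vec6_4, vec6_5]; omega, by simp [vec6_0, vec6_1, vec6_2, vec6_3, vec6_4, vec6_5]; omega⟩)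
      · refine step_aux v _ g8 (fun k => by fin_cases k <;> simp [vec6_0, vec6_1, vec6_2, vec6_3, vec6_4, vec6_5] <;> omega)
          (ih (n - 2) (by omega) _ (by simp [vec6_0, vec6_1, vec6_2, vec6_3, vec6_4, vec6_5]; omega) ⟨⟨p - 1, by simp [vec6_0, vec6_1, vec6_2, vec6_3, vec6_4, vec6_5]; omega⟩, by simp [vec6_0, vec6_1, vec6_2, vec6_3, vec6_4, vec6_5]; omega, by simp [vec6_0, vec6_1, vec6_2, vec6_3, vec6_4, vec6_5]; omega, by simp [vec6_0, vec6_1, vec6_2, vec6_3, vec6_4, vec6_5]; omega⟩)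
    · have ha : 1 ≤ v 2 + v 3 := by omega
      have hb : 1 ≤ v 4 + v 5 := by omega
      by_cases hs : 1 ≤ v 2 <;> by_cases ht : 1 ≤ v 4
      · refine step_aux v _ g9 (fun k => by fin_cases k <;> simp [vec6_0, vec6_1, vec6_2, vec6_3, vec6_4, vec6_5] <;> omega)
          (ih (n - 2) (by omega) _ (by simp [vec6_0, vec6_1, vec6_2, vec6_3, vec6_4, vec6_5]; omega) ⟨⟨p - 1, by simp [vec6_0, vec6_1, vec6_2, vec6_3, vec6_4, vec6_5]; omega⟩, by simp [vec6_0, vec6_1, vec6_2, vec6_3, vec6_4, vec6_5]; omega, by simp [vec6_0, vec6_1, vec6_2, vec6_3, vec6_4, vec6_5]; omega, by simp [vec6_0, vec6_1, vec6_2, vec6_3, vec6_4, vec6_5]; omega⟩)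
      · refine step_aux v _ g10 (fun k => by fin_cases k <;> simp [vec6_0, vec6_1, vec6_2, vec6_3, vec6_4, vec6_5] <;> omega)
          (ih (n - 2) (by omega) _ (by simp [vec6_0, vec6_1, vec6_2, vec6_3, vec6_4, vec6_5]; omega) ⟨⟨p - 1, by simp [vec6_0, vec6_1, vec6_2, vec6_3, vec6_4, vec6_5]; omega⟩, by simp [vec6_0, vec6_1, vec6_2, vec6_3, vec6_4, vec6_5]; omega, by simp [vec6_0, vec6_1, vec6_2, vec6_3, vec6_4, vec6_5]; omega, by simp [vec6_0, vec6_1, vec6_2, vec6_3, vec6_4, vec6_5]; omega⟩)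
      · refine step_aux v _ g11 (fun k => by fin_cases k <;> simp [vec6_0, vec6_1, vec6_2, vec6_3, vec6_4, vec6_5] <;> omega)
          (ih (n - 2) (by omega) _ (by simp [vec6_0, vec6_1, vec6_2, vec6_3, vec6_4, vec6_5]; omega) ⟨⟨p - 1, by simp [vec6_0, vec6_1, vec6_2, vec6_3, vec6_4, vec6_5]; omega⟩, by simp [vec6_0, vec6_1, vec6_2, vec6_3, vec6_4, vec6_5]; omega, by simp [vec6_0, vec6_1, vec6_2, vec6_3, vec6_4, vec6_5]; omega, by simp [vec6_0, vec6_1, vec6_2, vec6_3, vec6_4, vec6_5]; omega⟩)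
      · refine step_aux v _ g12 (fun k => by fin_cases k <;> simp [vec6_0, vec6_1, vec6_2, vec6_3, vec6_4, vec6_5] <;> omega)
          (ih (n - 2) (by omega) _ (by simp [vec6_0, vec6_1, vec6_2, vec6_3, vec6_4, vec6_5]; omega) ⟨⟨p - 1, by simp [vec6_0, vec6_1, vec6_2, vec6_3, vec6_4, vec6_5]; omega⟩, by simp [vec6_0, vec6_1, vec6_2, vec6_3, vec6_4, vec6_5]; omega, by simp [vec6_0, vec6_1, vec6_2, vec6_3, vec6_4, vec6_5]; omega, by simp [vec6_0, vec6_1, vec6_2, vec6_3, vec6_4, vec6_5]; omega⟩)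


/-- The additive monoid P₃ is generated by the 12 elements X₍ᵢ,ₛ₎,₍ⱼ,ₜ₎. -/
theorem P3_generated_by_pairs : AddSubmonoid.closure pairGens = P3 := by
  apply le_antisymm
  · rw [AddSubmonoid.closure_le]
    rintro v ⟨i, j, s, t, hij, rfl⟩
    fin_cases i <;> fin_cases j <;> fin_cases s <;> fin_cases t <;>
      first
        | exact absurd hij (by decide)
        | exact ⟨by decide, by decide, by decide, by decide⟩
  · intro v hv
    exact mem_closure_of_mem_P3 _ v rfl hv
end

section
/- Let R̄ := ℂ[a,b,c,d,t]/(ad - bc - t²). The quotient of R̄ by the ideal generated by the class of t is isomorphic as a ℂ-algebra to the monoid algebra ℂ[P], via the map sending the classes of a, b, c, d to the monoid-algebra basis elements corresponding to (0,0,1), (0,1,1), (1,0,1), (1,1,1) ∈ P respectively. (The boundary divisor D ⊂ X = Proj(R̄) is cut out by t, and the associated graded algebra of the filtration F on ℂ[SL₂(ℂ)] is ℂ[P].) -/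
open MvPolynomial

noncomputable def relIdealBar : Ideal (MvPolynomial (Fin 5) ℂ) :=
  Ideal.span {X 0 * X 3 - X 1 * X 2 - X 4 ^ 2}

abbrev ReesRBar : Type := MvPolynomial (Fin 5) ℂ ⧸ relIdealBar

noncomputable def tclBar : ReesRBar := Ideal.Quotient.mk relIdealBar (X 4)

def P : AddSubmonoid (ℤ × ℤ × ℤ) where
  carrier := {p | 0 ≤ p.1 ∧ p.1 ≤ p.2.2 ∧ 0 ≤ p.2.1 ∧ p.2.1 ≤ p.2.2}
  zero_mem' := ⟨le_refl 0, le_refl 0, le_refl 0, le_refl 0⟩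
  add_mem' := by
    rintro ⟨a1, a2, a3⟩ ⟨b1, b2, b3⟩ ⟨h1, h2, h3, h4⟩ ⟨k1, k2, k3, k4⟩
    refine ⟨?_, ?_, ?_, ?_⟩ <;> simp only [Prod.fst_add, Prod.snd_add] at * <;> omega

def pA : P := ⟨(0, 0, 1), by norm_num [P]⟩
def pB : P := ⟨(0, 1, 1), by norm_num [P]⟩
def pC : P := ⟨(1, 0, 1), by norm_num [P]⟩
def pD : P := ⟨(1, 1, 1), by norm_num [P]⟩

noncomputable section SFB

abbrev Qt : Type := ReesRBar ⧸ Ideal.span {tclBar}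

def mkQ : MvPolynomial (Fin 5) ℂ →ₐ[ℂ] Qt :=
  (Ideal.Quotient.mkₐ ℂ (Ideal.span {tclBar})).comp (Ideal.Quotient.mkₐ ℂ relIdealBar)

def Aq : Qt := mkQ (X 0)
def Bq : Qt := mkQ (X 1)
def Cq : Qt := mkQ (X 2)
def Dq : Qt := mkQ (X 3)

lemma mkQ_X4 : mkQ (X 4) = 0 := by
  show (Ideal.Quotient.mkₐ ℂ (Ideal.span {tclBar})) ((Ideal.Quotient.mkₐ ℂ relIdealBar) (X 4)) = 0
  rw [Ideal.Quotient.mkₐ_eq_mk, Ideal.Quotient.mkₐ_eq_mk]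
  rw [Ideal.Quotient.eq_zero_iff_mem]
  exact Ideal.mem_span_singleton_self _

lemma relQ : Aq * Dq = Bq * Cq := by
  have h1 : mkQ (X 0 * X 3 - X 1 * X 2 - X 4 ^ 2) = 0 := by
    show (Ideal.Quotient.mkₐ ℂ (Ideal.span {tclBar}))
      ((Ideal.Quotient.mkₐ ℂ relIdealBar) _) = 0
    rw [Ideal.Quotient.mkₐ_eq_mk, Ideal.Quotient.mkₐ_eq_mk]
    rw [show (Ideal.Quotient.mk relIdealBar) (X 0 * X 3 - X 1 * X 2 - X 4 ^ 2) = 0 from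
      (Ideal.Quotient.eq_zero_iff_mem).2 (Ideal.subset_span rfl)]
    simp
  have h2 : mkQ (X 4 ^ 2) = 0 := by rw [map_pow, mkQ_X4]; exact zero_pow (M₀ := Qt) two_ne_zero
  have := h1
  rw [map_sub, map_sub, h2, sub_zero, sub_eq_zero, map_mul, map_mul] at this
  exact this

lemma swapQ (i j u v k : ℕ) :
    Cq ^ (i + k) * Bq ^ (j + k) * Aq ^ u * Dq ^ v
      = Cq ^ i * Bq ^ j * Aq ^ (u + k) * Dq ^ (v + k) := by
  calc Cq ^ (i + k) * Bq ^ (j + k) * Aq ^ u * Dq ^ v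
      = Cq ^ i * Bq ^ j * Aq ^ u * Dq ^ v * (Bq * Cq) ^ k := by ring
    _ = Cq ^ i * Bq ^ j * Aq ^ u * Dq ^ v * (Aq * Dq) ^ k := by rw [relQ]
    _ = Cq ^ i * Bq ^ j * Aq ^ (u + k) * Dq ^ (v + k) := by ring

def Fm (p : P) : Qt :=
  Cq ^ ((p : ℤ × ℤ × ℤ).1 - min (p : ℤ × ℤ × ℤ).1 (p : ℤ × ℤ × ℤ).2.1).toNat *
  Bq ^ ((p : ℤ × ℤ × ℤ).2.1 - min (p : ℤ × ℤ × ℤ).1 (p : ℤ × ℤ × ℤ).2.1).toNat *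
  Aq ^ ((p : ℤ × ℤ × ℤ).2.2 - max (p : ℤ × ℤ × ℤ).1 (p : ℤ × ℤ × ℤ).2.1).toNat *
  Dq ^ (min (p : ℤ × ℤ × ℤ).1 (p : ℤ × ℤ × ℤ).2.1).toNat

lemma Fm_zero : Fm 0 = 1 := by
  simp [Fm]

set_option maxHeartbeats 1600000 in
lemma Fm_add (p q : P) : Fm (p + q) = Fm p * Fm q := by
  obtain ⟨⟨x1, y1, z1⟩, hp⟩ := p
  obtain ⟨⟨x2, y2, z2⟩, hq⟩ := q
  obtain ⟨h1, h2, h3, h4⟩ := hp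
  obtain ⟨k1, k2, k3, k4⟩ := hq
  simp only at h1 h2 h3 h4 k1 k2 k3 k4
  unfold Fm
  simp only [AddSubmonoid.coe_add, Prod.fst_add, Prod.snd_add]
  set k : ℕ := (min (x1 + x2) (y1 + y2) - min x1 y1 - min x2 y2).toNat with hk
  have e1 : ((x1 + x2) - min (x1 + x2) (y1 + y2)).toNat + k
      = (x1 - min x1 y1).toNat + (x2 - min x2 y2).toNat := by omega
  have e2 : ((y1 + y2) - min (x1 + x2) (y1 + y2)).toNat + k
      = (y1 - min x1 y1).toNat + (y2 - min x2 y2).toNat := by omega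
  have e3 : ((z1 + z2) - max (x1 + x2) (y1 + y2)).toNat
      = (z1 - max x1 y1).toNat + (z2 - max x2 y2).toNat + k := by omega
  have e4 : (min (x1 + x2) (y1 + y2)).toNat
      = (min x1 y1).toNat + (min x2 y2).toNat + k := by omega
  rw [e3, e4,
    ← swapQ ((x1 + x2 - min (x1 + x2) (y1 + y2)).toNat)
      ((y1 + y2 - min (x1 + x2) (y1 + y2)).toNat)
      ((z1 - max x1 y1).toNat + (z2 - max x2 y2).toNat)
      ((min x1 y1).toNat + (min x2 y2).toNat) k,
    e1, e2]
  ring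

def Fhom : Multiplicative P →* Qt where
  toFun p := Fm (Multiplicative.toAdd p)
  map_one' := Fm_zero
  map_mul' p q := Fm_add _ _

def gHom : AddMonoidAlgebra ℂ P →ₐ[ℂ] Qt := AddMonoidAlgebra.lift ℂ Qt P Fhom

lemma gHom_single (p : P) : gHom (AddMonoidAlgebra.single p 1) = Fm p := by
  simp [gHom, AddMonoidAlgebra.lift_single, Fhom]

def φ0 : MvPolynomial (Fin 5) ℂ →ₐ[ℂ] AddMonoidAlgebra ℂ P :=
  aeval ![AddMonoidAlgebra.single pA 1, AddMonoidAlgebra.single pB 1,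
    AddMonoidAlgebra.single pC 1, AddMonoidAlgebra.single pD 1, 0]

lemma pApD : pA + pD = pB + pC := by
  apply Subtype.ext
  show ((0:ℤ), (0:ℤ), (1:ℤ)) + (1, 1, 1) = (0, 1, 1) + (1, 0, 1)
  norm_num [Prod.ext_iff]

lemma φ0_rel : φ0 (X 0 * X 3 - X 1 * X 2 - X 4 ^ 2) = 0 := by
  simp only [φ0, map_sub, map_mul, map_pow, aeval_X]
  simp only [Matrix.cons_val_zero, Matrix.cons_val_one, Matrix.head_cons,
    Matrix.cons_val_two, Matrix.tail_cons, Matrix.cons_val_three, Matrix.cons_val_four]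
  rw [AddMonoidAlgebra.single_mul_single, AddMonoidAlgebra.single_mul_single, pApD]
  ring

def φ1 : ReesRBar →ₐ[ℂ] AddMonoidAlgebra ℂ P :=
  Ideal.Quotient.liftₐ relIdealBar φ0 (by
    intro a ha
    have hle : relIdealBar ≤ RingHom.ker (φ0 : MvPolynomial (Fin 5) ℂ →+* AddMonoidAlgebra ℂ P) := by
      rw [relIdealBar, Ideal.span_le, Set.singleton_subset_iff, SetLike.mem_coe,
        RingHom.mem_ker]
      exact φ0_rel
    exact hle ha)

lemma φ1_mk (x : MvPolynomial (Fin 5) ℂ) :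
    φ1 (Ideal.Quotient.mk relIdealBar x) = φ0 x := rfl

lemma φ1_tcl : φ1 tclBar = 0 := by
  rw [tclBar, φ1_mk]
  simp [φ0]

def φHom : Qt →ₐ[ℂ] AddMonoidAlgebra ℂ P :=
  Ideal.Quotient.liftₐ (Ideal.span {tclBar}) φ1 (by
    intro a ha
    have hle : Ideal.span {tclBar} ≤ RingHom.ker (φ1 : ReesRBar →+* AddMonoidAlgebra ℂ P) := by
      rw [Ideal.span_le, Set.singleton_subset_iff, SetLike.mem_coe, RingHom.mem_ker]
      exact φ1_tcl
    exact hle ha)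

lemma φ_mkQ (x : MvPolynomial (Fin 5) ℂ) : φHom (mkQ x) = φ0 x := rfl

lemma Fm_pA : Fm pA = Aq := by
  rw [Fm]
  norm_num [pA]
lemma Fm_pB : Fm pB = Bq := by
  rw [Fm]
  norm_num [pB]
lemma Fm_pC : Fm pC = Cq := by
  rw [Fm]
  norm_num [pC]
lemma Fm_pD : Fm pD = Dq := by
  rw [Fm]
  norm_num [pD]

lemma mkQ_surj : Function.Surjective mkQ := by
  intro q
  obtain ⟨r, rfl⟩ := Ideal.Quotient.mk_surjective q
  obtain ⟨x, rfl⟩ := Ideal.Quotient.mk_surjective r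
  exact ⟨x, rfl⟩

lemma g_comp_φ : gHom.comp φHom = AlgHom.id ℂ Qt := by
  have key : (gHom.comp φHom).comp mkQ = mkQ := by
    apply MvPolynomial.algHom_ext
    intro i
    rw [AlgHom.comp_apply, AlgHom.comp_apply, φ_mkQ]
    fin_cases i
    · show gHom (φ0 (X 0)) = mkQ (X 0)
      simp only [φ0, aeval_X, Matrix.cons_val_zero, gHom_single, Fm_pA]; rfl
    · show gHom (φ0 (X 1)) = mkQ (X 1)
      simp only [φ0, aeval_X, Matrix.cons_val_one, Matrix.cons_val_zero, Matrix.head_cons, gHom_single, Fm_pB]; rfl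
    · show gHom (φ0 (X 2)) = mkQ (X 2)
      simp only [φ0, aeval_X]
      rw [show (![AddMonoidAlgebra.single pA 1, AddMonoidAlgebra.single pB 1,
        AddMonoidAlgebra.single pC 1, AddMonoidAlgebra.single pD 1, 0] 2
          : AddMonoidAlgebra ℂ P) = AddMonoidAlgebra.single pC 1 from rfl]
      rw [gHom_single, Fm_pC]; rfl
    · show gHom (φ0 (X 3)) = mkQ (X 3)
      simp only [φ0, aeval_X]
      rw [show (![AddMonoidAlgebra.single pA 1, AddMonoidAlgebra.single pB 1,
        AddMonoidAlgebra.single pC 1, AddMonoidAlgebra.single pD 1, 0] 3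
          : AddMonoidAlgebra ℂ P) = AddMonoidAlgebra.single pD 1 from rfl]
      rw [gHom_single, Fm_pD]; rfl
    · show gHom (φ0 (X 4)) = mkQ (X 4)
      simp only [φ0, aeval_X]
      rw [show (![AddMonoidAlgebra.single pA 1, AddMonoidAlgebra.single pB 1,
        AddMonoidAlgebra.single pC 1, AddMonoidAlgebra.single pD 1, 0] 4
          : AddMonoidAlgebra ℂ P) = 0 from rfl]
      rw [map_zero, mkQ_X4]
  apply AlgHom.ext
  intro q
  obtain ⟨x, rfl⟩ := mkQ_surj q
  exact DFunLike.congr_fun key x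

lemma φ_Fm (p : P) : φHom (Fm p) = AddMonoidAlgebra.single p 1 := by
  obtain ⟨⟨x, y, z⟩, hp⟩ := p
  obtain ⟨h1, h2, h3, h4⟩ := hp
  simp only at h1 h2 h3 h4
  rw [Fm]
  simp only [map_mul, map_pow]
  have hA : φHom Aq = AddMonoidAlgebra.single pA 1 := by
    rw [Aq, φ_mkQ]; simp [φ0]
  have hB : φHom Bq = AddMonoidAlgebra.single pB 1 := by
    rw [Bq, φ_mkQ]; simp [φ0]
  have hC : φHom Cq = AddMonoidAlgebra.single pC 1 := by
    rw [Cq, φ_mkQ]; simp [φ0]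
  have hD : φHom Dq = AddMonoidAlgebra.single pD 1 := by
    rw [Dq, φ_mkQ]; simp [φ0]
  rw [hA, hB, hC, hD]
  rw [AddMonoidAlgebra.single_pow, AddMonoidAlgebra.single_pow,
    AddMonoidAlgebra.single_pow, AddMonoidAlgebra.single_pow,
    AddMonoidAlgebra.single_mul_single, AddMonoidAlgebra.single_mul_single,
    AddMonoidAlgebra.single_mul_single]
  rw [one_pow, one_pow, one_pow, one_pow, one_mul, one_mul, one_mul]
  congr 1
  apply Subtype.ext
  show _ • (pC : ℤ × ℤ × ℤ) + _ • (pB : ℤ × ℤ × ℤ) + _ • (pA : ℤ × ℤ × ℤ)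
      + _ • (pD : ℤ × ℤ × ℤ) = (x, y, z)
  simp only [pA, pB, pC, pD, Prod.smul_mk, smul_eq_mul, Prod.mk_add_mk, Prod.mk.injEq,
    nsmul_eq_mul, mul_one, mul_zero]
  refine ⟨?_, ?_, ?_⟩ <;> omega

lemma φ_comp_g : φHom.comp gHom = AlgHom.id ℂ (AddMonoidAlgebra ℂ P) := by
  apply AddMonoidAlgebra.algHom_ext
  intro p
  simp only [AlgHom.comp_apply, AlgHom.id_apply, gHom_single]
  exact φ_Fm p
  exact Subsingleton.elim _ _

end SFB

/-- The quotient of R̄ = ℂ[a,b,c,d,t]/(ad - bc - t²) by the ideal generated by the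
class of t is ℂ-algebra isomorphic to the monoid algebra ℂ[P], via the map sending
the classes of a, b, c, d to the basis elements at (0,0,1), (0,1,1), (1,0,1),
(1,1,1) ∈ P respectively. -/
theorem special_fiber_bar_iso_semigroup_algebra :
    ∃ e : (ReesRBar ⧸ Ideal.span {tclBar}) ≃ₐ[ℂ] AddMonoidAlgebra ℂ P,
      e (Ideal.Quotient.mk (Ideal.span {tclBar}) (Ideal.Quotient.mk relIdealBar (X 0)))
          = AddMonoidAlgebra.single pA 1 ∧
      e (Ideal.Quotient.mk (Ideal.span {tclBar}) (Ideal.Quotient.mk relIdealBar (X 1)))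
          = AddMonoidAlgebra.single pB 1 ∧
      e (Ideal.Quotient.mk (Ideal.span {tclBar}) (Ideal.Quotient.mk relIdealBar (X 2)))
          = AddMonoidAlgebra.single pC 1 ∧
      e (Ideal.Quotient.mk (Ideal.span {tclBar}) (Ideal.Quotient.mk relIdealBar (X 3)))
          = AddMonoidAlgebra.single pD 1 := by
  refine ⟨AlgEquiv.ofAlgHom φHom gHom φ_comp_g g_comp_φ, ?_, ?_, ?_, ?_⟩ <;>
    · show φHom (mkQ _) = _
      rw [φ_mkQ]
      simp [φ0]
end

section
/- Let A and B be commutative ℂ-algebras that are integral domains, let v be a valuation on A and w a valuation on B (both lifting the trivial valuation on ℂ). For m ∈ ℝ let F≤m ⊆ A ⊗_ℂ B be the ℂ-subspace of elements admitting a representation Σᵢ aᵢ ⊗ bᵢ with v(aᵢ) + w(bᵢ) ≤ m for every i, and let F<m be the union of the F≤m' over m' < m; similarly set v≤i = {a ∈ A : v(a) ≤ i}, v<i = {a ∈ A : v(a) < i}, and likewise w≤j, w<j. Then for every m ∈ ℝ there is an isomorphism of ℂ-vector spaces F≤m / F<m ≅ ⊕_{(i,j) ∈ ℝ², i+j=m}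 (v≤i / v<i) ⊗_ℂ (w≤j / w<j), where only finitely many summands are nonzero on any element. (Hence the associated graded algebra of the sum filtration on A ⊗ B is gr_v(A) ⊗ gr_w(B).) -/
open scoped TensorProduct

open Module

lemma tensor_sep {V W : Type*} [AddCommGroup V] [Module ℂ V] [AddCommGroup W] [Module ℂ W]
    (t : V ⊗[ℂ] W)
    (h : ∀ (f : V →ₗ[ℂ] ℂ) (g : W →ₗ[ℂ] ℂ),
      TensorProduct.lift (((LinearMap.mul ℂ ℂ).comp f).compl₂ g) t = 0) : t = 0 := by
  let b := Basis.ofVectorSpace ℂ V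
  let c := Basis.ofVectorSpace ℂ W
  let B := b.tensorProduct c
  have : B.repr t = 0 := by
    ext ⟨k, l⟩
    have key : (Finsupp.lapply (k, l) ∘ₗ (B.repr : V ⊗[ℂ] W →ₗ[ℂ] _))
        = TensorProduct.lift (((LinearMap.mul ℂ ℂ).comp (b.coord k)).compl₂ (c.coord l)) := by
      apply TensorProduct.ext'
      intro x y
      simp [B, Basis.tensorProduct_repr_tmul_apply, Basis.coord_apply, mul_comm]
    have := congrArg (fun (f : V ⊗[ℂ] W →ₗ[ℂ] ℂ) => f t) key
    simpa [h] using this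
  exact (LinearEquiv.map_eq_zero_iff B.repr).mp this

namespace AGaux

lemma wb_lt_le {x y : WithBot ℝ} {i j : ℝ} (hx : x < (i : WithBot ℝ)) (hy : y ≤ (j : WithBot ℝ)) :
    x + y < ((i + j : ℝ) : WithBot ℝ) := by
  induction x using WithBot.recBotCoe with
  | bot => rw [WithBot.bot_add]; exact WithBot.bot_lt_coe _
  | coe s =>
    induction y using WithBot.recBotCoe with
    | bot => rw [WithBot.add_bot]; exact WithBot.bot_lt_coe _
    | coe t =>
      rw [← WithBot.coe_add, WithBot.coe_lt_coe] at *
      rw [WithBot.coe_le_coe] at hy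
      linarith

lemma wb_le_lt {x y : WithBot ℝ} {i j : ℝ} (hx : x ≤ (i : WithBot ℝ)) (hy : y < (j : WithBot ℝ)) :
    x + y < ((i + j : ℝ) : WithBot ℝ) := by
  rw [add_comm x y, show ((i+j:ℝ) : WithBot ℝ) = ((j+i : ℝ) : WithBot ℝ) by rw [add_comm]]
  exact wb_lt_le hy hx

variable {A B : Type} [CommRing A] [CommRing B] [Algebra ℂ A] [Algebra ℂ B]

def Fle (v : A → WithBot ℝ) (w : B → WithBot ℝ) (r : ℝ) : Submodule ℂ (A ⊗[ℂ] B) :=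
  Submodule.span ℂ {x | ∃ (a : A) (b : B), v a + w b ≤ (r : WithBot ℝ) ∧ x = a ⊗ₜ[ℂ] b}

def Flt (v : A → WithBot ℝ) (w : B → WithBot ℝ) (m : ℝ) : Submodule ℂ (A ⊗[ℂ] B) :=
  ⨆ (r : ℝ) (_ : r < m), Fle v w r

def Vle (v : A → WithBot ℝ) (i : ℝ) : Submodule ℂ A :=
  Submodule.span ℂ {a | v a ≤ (i : WithBot ℝ)}

def Vlt (v : A → WithBot ℝ) (i : ℝ) : Submodule ℂ A :=
  Submodule.span ℂ {a | v a < (i : WithBot ℝ)}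

lemma span_val_mem (v : A → WithBot ℝ)
    (hv1 : ∀ a b : A, v (a * b) = v a + v b)
    (hv2 : ∀ a b : A, v (a + b) ≤ max (v a) (v b))
    (hv3 : ∀ c : ℂ, c ≠ 0 → v (algebraMap ℂ A c) = 0)
    (hv4 : v 0 = ⊥) (P : WithBot ℝ → Prop) (hbot : P ⊥) (hdown : ∀ {x y}, x ≤ y → P y → P x)
    (a : A) : a ∈ Submodule.span ℂ {a : A | P (v a)} ↔ P (v a) := by
  have hsm : ∀ (c : ℂ) (a : A), v (c • a) ≤ v a := by
    intro c a
    rcases eq_or_ne c 0 with h | h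
    · simp [h, hv4]
    · rw [Algebra.smul_def, hv1, hv3 c h, zero_add]
  constructor
  · intro ha
    induction ha using Submodule.span_induction with
    | mem x hx => exact hx
    | zero => simpa [hv4] using hbot
    | add x y _ _ hx hy =>
        rcases max_cases (v x) (v y) with ⟨hm, _⟩ | ⟨hm, _⟩
        · exact hdown ((hv2 x y).trans_eq hm) hx
        · exact hdown ((hv2 x y).trans_eq hm) hy
    | smul c x _ hx => exact hdown (hsm c x) hx
  · exact fun h => Submodule.subset_span h

lemma mem_Vle (v : A → WithBot ℝ)
    (hv1 : ∀ a b : A, v (a * b) = v a + v b)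
    (hv2 : ∀ a b : A, v (a + b) ≤ max (v a) (v b))
    (hv3 : ∀ c : ℂ, c ≠ 0 → v (algebraMap ℂ A c) = 0)
    (hv4 : v 0 = ⊥) {i : ℝ} {a : A} : a ∈ Vle v i ↔ v a ≤ (i : WithBot ℝ) :=
  span_val_mem v hv1 hv2 hv3 hv4 (fun x => x ≤ (i : WithBot ℝ)) bot_le (fun h h' => le_trans h h') a

lemma mem_Vlt (v : A → WithBot ℝ)
    (hv1 : ∀ a b : A, v (a * b) = v a + v b)
    (hv2 : ∀ a b : A, v (a + b) ≤ max (v a) (v b))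
    (hv3 : ∀ c : ℂ, c ≠ 0 → v (algebraMap ℂ A c) = 0)
    (hv4 : v 0 = ⊥) {i : ℝ} {a : A} : a ∈ Vlt v i ↔ v a < (i : WithBot ℝ) :=
  span_val_mem v hv1 hv2 hv3 hv4 (fun x => x < (i : WithBot ℝ)) (WithBot.bot_lt_coe i) (fun h h' => lt_of_le_of_lt h h') a

variable (v : A → WithBot ℝ) (w : B → WithBot ℝ) (m : ℝ)

lemma mem_Fle {a : A} {b : B} (h : v a + w b ≤ (m : WithBot ℝ)) : a ⊗ₜ[ℂ] b ∈ Fle v w m :=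
  Submodule.subset_span ⟨a, b, h, rfl⟩

lemma mem_Flt {a : A} {b : B} (h : v a + w b < (m : WithBot ℝ)) : a ⊗ₜ[ℂ] b ∈ Flt v w m := by
  obtain ⟨r, hr1, hr2⟩ : ∃ r : ℝ, v a + w b ≤ (r : WithBot ℝ) ∧ r < m := by
    cases hvw : (v a + w b) with
    | bot => exact ⟨m - 1, bot_le, by linarith⟩
    | coe t =>
      refine ⟨t, le_refl _, ?_⟩
      rw [hvw] at h
      exact_mod_cast h
  exact Submodule.mem_iSup_of_mem r (Submodule.mem_iSup_of_mem hr2 (mem_Fle v w r hr1))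


structure IsVal {A : Type} [CommRing A] [Algebra ℂ A] (v : A → WithBot ℝ) : Prop where
  mul : ∀ a b : A, v (a * b) = v a + v b
  add : ∀ a b : A, v (a + b) ≤ max (v a) (v b)
  alg : ∀ c : ℂ, c ≠ 0 → v (algebraMap ℂ A c) = 0
  zero : v 0 = ⊥

lemma mem_Vle' {v : A → WithBot ℝ} (hV : IsVal v) {i : ℝ} {a : A} :
    a ∈ Vle v i ↔ v a ≤ (i : WithBot ℝ) := mem_Vle v hV.mul hV.add hV.alg hV.zero

lemma mem_Vlt' {v : A → WithBot ℝ} (hV : IsVal v) {i : ℝ} {a : A} :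
    a ∈ Vlt v i ↔ v a < (i : WithBot ℝ) := mem_Vlt v hV.mul hV.add hV.alg hV.zero

abbrev Qt : Type := ↥(Fle v w m) ⧸ (Flt v w m).comap (Fle v w m).subtype

abbrev gpiece (v : A → WithBot ℝ) (i : ℝ) : Type :=
  ↥(Vle v i) ⧸ ((Vlt v i).comap (Vle v i).subtype)

variable {v w}

lemma mem_Fle' (hV : IsVal v) (hW : IsVal w) {i j : ℝ} (hij : i + j = m)
    (a : Vle v i) (b : Vle w j) : a.1 ⊗ₜ[ℂ] b.1 ∈ Fle v w m := by
  apply mem_Fle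
  calc v a.1 + w b.1 ≤ (i : WithBot ℝ) + (j : WithBot ℝ) :=
        add_le_add ((mem_Vle' hV).mp a.2) ((mem_Vle' hW).mp b.2)
    _ = ((i + j : ℝ) : WithBot ℝ) := (WithBot.coe_add i j).symm
    _ = (m : WithBot ℝ) := by rw [hij]

noncomputable def bil (hV : IsVal v) (hW : IsVal w) {i j : ℝ} (hij : i + j = m) :
    ↥(Vle v i) →ₗ[ℂ] ↥(Vle w j) →ₗ[ℂ] Qt v w m :=
  LinearMap.mk₂ ℂ
    (fun a b => Submodule.Quotient.mk ⟨a.1 ⊗ₜ[ℂ] b.1, mem_Fle' m hV hW hij a b⟩)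
    (fun a₁ a₂ b => by
      rw [← Submodule.Quotient.mk_add]
      exact congrArg _ (Subtype.ext (TensorProduct.add_tmul a₁.1 a₂.1 b.1)))
    (fun c a b => by
      rw [← Submodule.Quotient.mk_smul]
      exact congrArg _ (Subtype.ext (TensorProduct.smul_tmul' c a.1 b.1).symm))
    (fun a b₁ b₂ => by
      rw [← Submodule.Quotient.mk_add]
      exact congrArg _ (Subtype.ext (TensorProduct.tmul_add a.1 b₁.1 b₂.1)))
    (fun c a b => by
      rw [← Submodule.Quotient.mk_smul]
      exact congrArg _ (Subtype.ext (TensorProduct.tmul_smul c a.1 b.1)))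

lemma bil_ker_right (hV : IsVal v) (hW : IsVal w) {i j : ℝ} (hij : i + j = m) :
    (Vlt w j).comap (Vle w j).subtype ≤ LinearMap.ker (bil m hV hW hij).flip := by
  intro b hb
  rw [LinearMap.mem_ker]
  apply LinearMap.ext
  intro a
  simp only [LinearMap.flip_apply, bil, LinearMap.mk₂_apply, LinearMap.zero_apply]
  rw [Submodule.Quotient.mk_eq_zero]
  refine Submodule.mem_comap.2 (mem_Flt v w m ?_)
  have h1 : v a.1 ≤ (i : WithBot ℝ) := (mem_Vle' hV).mp a.2
  have h2 : w b.1 < (j : WithBot ℝ) := (mem_Vlt' hW).mp (Submodule.mem_comap.1 hb)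
  have := wb_le_lt h1 h2
  rwa [hij] at this

lemma bil_ker_left (hV : IsVal v) (hW : IsVal w) {i j : ℝ} (hij : i + j = m) :
    (Vlt v i).comap (Vle v i).subtype ≤ LinearMap.ker
      (((Vlt w j).comap (Vle w j).subtype).liftQ (bil m hV hW hij).flip
        (bil_ker_right m hV hW hij)).flip := by
  intro a ha
  rw [LinearMap.mem_ker]
  apply LinearMap.ext
  intro y
  obtain ⟨b, rfl⟩ := Submodule.Quotient.mk_surjective _ y
  simp only [LinearMap.flip_apply, Submodule.liftQ_apply, bil, LinearMap.mk₂_apply,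
    LinearMap.zero_apply]
  rw [Submodule.Quotient.mk_eq_zero]
  refine Submodule.mem_comap.2 (mem_Flt v w m ?_)
  have h1 : v a.1 < (i : WithBot ℝ) := (mem_Vlt' hV).mp (Submodule.mem_comap.1 ha)
  have h2 : w b.1 ≤ (j : WithBot ℝ) := (mem_Vle' hW).mp b.2
  have := wb_lt_le h1 h2
  rwa [hij] at this

noncomputable def gbil (hV : IsVal v) (hW : IsVal w) {i j : ℝ} (hij : i + j = m) :
    gpiece v i →ₗ[ℂ] gpiece w j →ₗ[ℂ] Qt v w m :=
  Submodule.liftQ _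
    (((Vlt w j).comap (Vle w j).subtype).liftQ (bil m hV hW hij).flip
        (bil_ker_right m hV hW hij)).flip
    (bil_ker_left m hV hW hij)

lemma gbil_mk (hV : IsVal v) (hW : IsVal w) {i j : ℝ} (hij : i + j = m)
    (a : Vle v i) (b : Vle w j) :
    gbil m hV hW hij (Submodule.Quotient.mk a) (Submodule.Quotient.mk b) =
      Submodule.Quotient.mk ⟨a.1 ⊗ₜ[ℂ] b.1, mem_Fle' m hV hW hij a b⟩ := rfl

noncomputable def phi (hV : IsVal v) (hW : IsVal w) :
    DirectSum {p : ℝ × ℝ // p.1 + p.2 = m}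
      (fun p => gpiece v p.1.1 ⊗[ℂ] gpiece w p.1.2) →ₗ[ℂ] Qt v w m :=
  DirectSum.toModule ℂ _ _ (fun p => TensorProduct.lift (gbil m hV hW p.2))

lemma phi_of [DecidableEq {p : ℝ × ℝ // p.1 + p.2 = m}] (hV : IsVal v) (hW : IsVal w)
    (p : {p : ℝ × ℝ // p.1 + p.2 = m}) (a : Vle v p.1.1) (b : Vle w p.1.2) :
    phi m hV hW (DirectSum.of _ p (Submodule.Quotient.mk a ⊗ₜ[ℂ] Submodule.Quotient.mk b)) =
      Submodule.Quotient.mk ⟨a.1 ⊗ₜ[ℂ] b.1, mem_Fle' m hV hW p.2 a b⟩ := by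
  rw [phi, ← DirectSum.lof_eq_of ℂ]
  erw [DirectSum.toModule_lof]
  rw [TensorProduct.lift.tmul, gbil_mk]


lemma phi_surj [DecidableEq {p : ℝ × ℝ // p.1 + p.2 = m}] (hV : IsVal v) (hW : IsVal w) :
    Function.Surjective (phi m hV hW) := by
  intro q
  obtain ⟨⟨z, hz⟩, rfl⟩ := Submodule.Quotient.mk_surjective _ q
  have hz' : z ∈ Submodule.span ℂ
      {x | ∃ (a : A) (b : B), v a + w b ≤ (m : WithBot ℝ) ∧ x = a ⊗ₜ[ℂ] b} := hz
  show ∃ a, (phi m hV hW) a = Submodule.Quotient.mk ⟨z, hz'⟩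
  clear hz
  induction hz' using Submodule.span_induction with
  | mem x hx =>
    obtain ⟨a, b, hab, rfl⟩ := hx
    rcases lt_or_eq_of_le hab with hlt | heq
    · refine ⟨0, ?_⟩
      rw [map_zero]
      symm
      rw [Submodule.Quotient.mk_eq_zero]
      exact Submodule.mem_comap.2 (mem_Flt v w m hlt)
    · obtain ⟨i, hva⟩ : ∃ i : ℝ, v a = (i : WithBot ℝ) := by
        cases h : v a with
        | bot => rw [h, WithBot.bot_add] at heq; exact absurd heq (by simp)
        | coe i => exact ⟨i, rfl⟩
      obtain ⟨j, hvb⟩ : ∃ j : ℝ, w b = (j : WithBot ℝ) := by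
        cases h : w b with
        | bot => rw [hva, h, WithBot.add_bot] at heq; exact absurd heq (by simp)
        | coe j => exact ⟨j, rfl⟩
      have hij : i + j = m := by
        rw [hva, hvb, ← WithBot.coe_add] at heq
        exact_mod_cast heq
      refine ⟨DirectSum.of _ ⟨(i, j), hij⟩
        (Submodule.Quotient.mk ⟨a, (mem_Vle' hV).2 hva.le⟩ ⊗ₜ[ℂ]
         Submodule.Quotient.mk ⟨b, (mem_Vle' hW).2 hvb.le⟩), ?_⟩
      exact phi_of m hV hW ⟨(i, j), hij⟩ _ _
  | zero =>
    refine ⟨0, ?_⟩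
    rw [map_zero]
    symm
    rw [Submodule.Quotient.mk_eq_zero]
    exact Submodule.mem_comap.2 (Submodule.zero_mem _)
  | add x y hx hy ihx ihy =>
    obtain ⟨x', hx'⟩ := ihx
    obtain ⟨y', hy'⟩ := ihy
    refine ⟨x' + y', ?_⟩
    rw [map_add, hx', hy', ← Submodule.Quotient.mk_add]
    rfl
  | smul c x hx ihx =>
    obtain ⟨x', hx'⟩ := ihx
    refine ⟨c • x', ?_⟩
    rw [map_smul, hx', ← Submodule.Quotient.mk_smul]
    rfl

lemma flt_le_ker (hV : IsVal v) (hW : IsVal w) {i j : ℝ} (hij : i + j = m)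
    (lt : A →ₗ[ℂ] ℂ) (mt : B →ₗ[ℂ] ℂ)
    (hlt0 : ∀ a : A, v a < (i : WithBot ℝ) → lt a = 0)
    (hmt0 : ∀ b : B, w b < (j : WithBot ℝ) → mt b = 0) :
    Flt v w m ≤ LinearMap.ker (TensorProduct.lift (((LinearMap.mul ℂ ℂ).comp lt).compl₂ mt)) := by
  rw [Flt]
  apply iSup_le
  intro r
  apply iSup_le
  intro hr
  rw [Fle, Submodule.span_le]
  rintro z ⟨a, b, hab, rfl⟩
  simp only [SetLike.mem_coe, LinearMap.mem_ker, TensorProduct.lift.tmul,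
    LinearMap.compl₂_apply, LinearMap.comp_apply, LinearMap.mul_apply']
  rcases lt_or_ge (v a) (i : WithBot ℝ) with h | h
  · rw [hlt0 a h, zero_mul]
  · have hwb : w b < (j : WithBot ℝ) := by
      by_contra hc
      push_neg at hc
      have h1 : ((m : ℝ) : WithBot ℝ) ≤ v a + w b := by
        have := add_le_add h hc
        rwa [← WithBot.coe_add, hij] at this
      have h2 : v a + w b < (m : WithBot ℝ) :=
        lt_of_le_of_lt hab (WithBot.coe_lt_coe.2 hr)
      exact absurd (lt_of_le_of_lt h1 h2) (lt_irrefl _)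
    rw [hmt0 b hwb, mul_zero]


set_option maxHeartbeats 1000000 in
lemma phi_inj [DecidableEq {p : ℝ × ℝ // p.1 + p.2 = m}] (hV : IsVal v) (hW : IsVal w) :
    Function.Injective (phi m hV hW) := by
  classical
  letI := @DirectSum.instAddCommGroup _
    (fun p : {p : ℝ × ℝ // p.1 + p.2 = m} => gpiece v p.1.1 ⊗[ℂ] gpiece w p.1.2) (fun _ => inferInstance)
  apply LinearMap.ker_eq_bot.mp
  rw [Submodule.eq_bot_iff]
  intro x hx
  rw [LinearMap.mem_ker] at hx
  refine DFinsupp.ext fun p => ?_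
  show x p = 0
  rcases p with ⟨⟨i, j⟩, hij⟩
  apply tensor_sep
  intro lam mu
  obtain ⟨lt, hlt⟩ := LinearMap.exists_extend (lam ∘ₗ ((Vlt v i).comap (Vle v i).subtype).mkQ)
  obtain ⟨mt, hmt⟩ := LinearMap.exists_extend (mu ∘ₗ ((Vlt w j).comap (Vle w j).subtype).mkQ)
  have hltval : ∀ a : Vle v i, lt a.1 = lam (Submodule.Quotient.mk a) :=
    fun a => LinearMap.congr_fun hlt a
  have hmtval : ∀ b : Vle w j, mt b.1 = mu (Submodule.Quotient.mk b) :=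
    fun b => LinearMap.congr_fun hmt b
  have hlt0 : ∀ a : A, v a < (i : WithBot ℝ) → lt a = 0 := by
    intro a ha
    have haa : a ∈ Vle v i := (mem_Vle' hV).2 ha.le
    rw [hltval ⟨a, haa⟩]
    have hz : (Submodule.Quotient.mk (⟨a, haa⟩ : Vle v i) :
        gpiece v i) = 0 := by
      rw [Submodule.Quotient.mk_eq_zero]
      exact Submodule.mem_comap.2 ((mem_Vlt' hV).2 ha)
    rw [hz, map_zero]
  have hmt0 : ∀ b : B, w b < (j : WithBot ℝ) → mt b = 0 := by
    intro b hb
    have hbb : b ∈ Vle w j := (mem_Vle' hW).2 hb.le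
    rw [hmtval ⟨b, hbb⟩]
    have hz : (Submodule.Quotient.mk (⟨b, hbb⟩ : Vle w j) :
        gpiece w j) = 0 := by
      rw [Submodule.Quotient.mk_eq_zero]
      exact Submodule.mem_comap.2 ((mem_Vlt' hW).2 hb)
    rw [hz, map_zero]
  set Φ := TensorProduct.lift (((LinearMap.mul ℂ ℂ).comp lt).compl₂ mt) with hΦ
  have hker : (Flt v w m).comap (Fle v w m).subtype ≤
      LinearMap.ker (Φ ∘ₗ (Fle v w m).subtype) := by
    intro z hz
    rw [LinearMap.mem_ker, LinearMap.comp_apply]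
    exact flt_le_ker m hV hW hij lt mt hlt0 hmt0 (Submodule.mem_comap.1 hz)
  set Ψ := Submodule.liftQ _ (Φ ∘ₗ (Fle v w m).subtype) hker with hΨ
  have hcomp : ∀ (p' : {p : ℝ × ℝ // p.1 + p.2 = m}) (a : Vle v p'.1.1) (b : Vle w p'.1.2),
      Ψ (phi m hV hW (DirectSum.of _ p'
        (Submodule.Quotient.mk a ⊗ₜ[ℂ] Submodule.Quotient.mk b))) = lt a.1 * mt b.1 := by
    intro p' a b
    rw [phi_of m hV hW p' a b, hΨ, Submodule.liftQ_apply, LinearMap.comp_apply]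
    simp only [Submodule.subtype_apply, hΦ, TensorProduct.lift.tmul,
      LinearMap.compl₂_apply, LinearMap.comp_apply, LinearMap.mul_apply']
  have hzero : ∀ (p' : {p : ℝ × ℝ // p.1 + p.2 = m}),
      p' ≠ ⟨(i, j), hij⟩ → ∀ ξ, Ψ (phi m hV hW (DirectSum.of _ p' ξ)) = 0 := by
    intro p' hne ξ
    induction ξ using TensorProduct.induction_on with
    | zero => rw [map_zero, map_zero, map_zero]
    | tmul xq yq =>
      obtain ⟨a, rfl⟩ := Submodule.Quotient.mk_surjective _ xq
      obtain ⟨b, rfl⟩ := Submodule.Quotient.mk_surjective _ yq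
      rw [hcomp]
      rcases lt_trichotomy p'.1.1 i with h | h | h
      · have hva : v a.1 < (i : WithBot ℝ) :=
          lt_of_le_of_lt ((mem_Vle' hV).mp a.2) (WithBot.coe_lt_coe.2 h)
        rw [hlt0 _ hva, zero_mul]
      · exfalso
        apply hne
        have h2 := p'.2
        have hj2 : p'.1.2 = j := by linarith
        exact Subtype.ext (Prod.ext h hj2)
      · have h2 := p'.2
        have hj2 : p'.1.2 < j := by linarith
        have hwb : w b.1 < (j : WithBot ℝ) :=
          lt_of_le_of_lt ((mem_Vle' hW).mp b.2) (WithBot.coe_lt_coe.2 hj2)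
        rw [hmt0 _ hwb, mul_zero]
    | add u u' ihu ihu' =>
      rw [map_add, map_add, map_add, ihu, ihu', add_zero]
  have hmainp : ∀ ξ : gpiece v i ⊗[ℂ] gpiece w j,
      Ψ (phi m hV hW (DirectSum.of _
        (⟨(i, j), hij⟩ : {p : ℝ × ℝ // p.1 + p.2 = m}) ξ)) =
      TensorProduct.lift (((LinearMap.mul ℂ ℂ).comp lam).compl₂ mu) ξ := by
    intro ξ
    induction ξ using TensorProduct.induction_on with
    | zero => rw [map_zero, map_zero, map_zero, map_zero]
    | tmul xq yq =>
      obtain ⟨a, rfl⟩ := Submodule.Quotient.mk_surjective _ xq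
      obtain ⟨b, rfl⟩ := Submodule.Quotient.mk_surjective _ yq
      rw [hcomp, TensorProduct.lift.tmul]
      simp only [LinearMap.compl₂_apply, LinearMap.comp_apply, LinearMap.mul_apply']
      rw [hltval, hmtval]
    | add u u' ihu ihu' =>
      rw [map_add, map_add, map_add, ihu, ihu', map_add]
  have hx2 : Ψ (phi m hV hW x) = 0 := by rw [hx, map_zero]
  rw [← DirectSum.sum_support_of x, map_sum, map_sum] at hx2
  by_cases hp : (⟨(i, j), hij⟩ : {p : ℝ × ℝ // p.1 + p.2 = m}) ∈ DFinsupp.support x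
  · rw [Finset.sum_eq_single_of_mem _ hp (fun q _ hq => hzero q hq _), hmainp] at hx2
    exact hx2
  · rw [DFinsupp.notMem_support_iff] at hp
    rw [hp, map_zero]

end AGaux


/-- Let A, B be commutative ℂ-algebra domains with valuations v, w lifting the
trivial valuation on ℂ.  For m ∈ ℝ let F≤m ⊆ A ⊗ B be the subspace spanned by pure
tensors a ⊗ b with v(a) + w(b) ≤ m, F<m the union of the F≤m' over m' < m, and
v≤i, v<i, w≤j, w<j the corresponding subspaces of A and B.  Then
F≤m / F<m ≅ ⊕_{i+j=m} (v≤i/v<i) ⊗ (w≤j/w<j) as ℂ-vector spaces. -/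
theorem associated_graded_of_sum_filtration
    {A B : Type} [CommRing A] [CommRing B] [IsDomain A] [IsDomain B]
    [Algebra ℂ A] [Algebra ℂ B]
    (v : A → WithBot ℝ) (w : B → WithBot ℝ)
    (hv1 : ∀ a b : A, v (a * b) = v a + v b)
    (hv2 : ∀ a b : A, v (a + b) ≤ max (v a) (v b))
    (hv3 : ∀ c : ℂ, c ≠ 0 → v (algebraMap ℂ A c) = 0)
    (hv4 : v 0 = ⊥)
    (hw1 : ∀ a b : B, w (a * b) = w a + w b)
    (hw2 : ∀ a b : B, w (a + b) ≤ max (w a) (w b))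
    (hw3 : ∀ c : ℂ, c ≠ 0 → w (algebraMap ℂ B c) = 0)
    (hw4 : w 0 = ⊥)
    (m : ℝ) :
    let Fle : ℝ → Submodule ℂ (A ⊗[ℂ] B) := fun r =>
      Submodule.span ℂ {x | ∃ (a : A) (b : B), v a + w b ≤ (r : WithBot ℝ) ∧ x = a ⊗ₜ[ℂ] b}
    let Flt : Submodule ℂ (A ⊗[ℂ] B) := ⨆ (r : ℝ) (_ : r < m), Fle r
    let Vle : ℝ → Submodule ℂ A := fun i => Submodule.span ℂ {a | v a ≤ (i : WithBot ℝ)}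
    let Vlt : ℝ → Submodule ℂ A := fun i => Submodule.span ℂ {a | v a < (i : WithBot ℝ)}
    let Wle : ℝ → Submodule ℂ B := fun j => Submodule.span ℂ {b | w b ≤ (j : WithBot ℝ)}
    let Wlt : ℝ → Submodule ℂ B := fun j => Submodule.span ℂ {b | w b < (j : WithBot ℝ)}
    Nonempty
      ((↥(Fle m) ⧸ (Flt.comap (Fle m).subtype)) ≃ₗ[ℂ]
        (DirectSum {p : ℝ × ℝ // p.1 + p.2 = m} fun p =>
          (↥(Vle p.1.1) ⧸ ((Vlt p.1.1).comap (Vle p.1.1).subtype)) ⊗[ℂ]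
            (↥(Wle p.1.2) ⧸ ((Wlt p.1.2).comap (Wle p.1.2).subtype)))) := by
  classical
  intro Fle Flt Vle Vlt Wle Wlt
  have hV : AGaux.IsVal v := ⟨hv1, hv2, hv3, hv4⟩
  have hW : AGaux.IsVal w := ⟨hw1, hw2, hw3, hw4⟩
  exact ⟨(LinearEquiv.ofBijective (AGaux.phi m hV hW)
    ⟨AGaux.phi_inj m hV hW, AGaux.phi_surj m hV hW⟩).symm⟩
end

section
/- Let G be a group, V a finite type, and T a simple graph on V which is a tree (connected and acyclic). Suppose h assigns to every pair of adjacent vertices u, v an element h(u,v) ∈ G with h(v,u) = h(u,v)⁻¹. Then there exists a function g : V → G such that for every edge {u,v} of T one has h(u,v) = g(u) · g(v)⁻¹ (equivalently, the gauge transformation (g(w))_{w ∈ V} moves the assignment h to the assignment that is identically 1 on all edges of the tree). (This is the gauge-fixing step showing that, for a spanning tree 𝒯 ⊂ Γ, every point of G^{E(Γ)} can be moved by the G^{V(Γ)}-action to one assigning the identity to all edges of 𝒯.) -/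
/-- Product of `h` along the edges of a walk. -/
def walkProd {G V : Type} [Group G] {T : SimpleGraph V} (h : V → V → G) :
    ∀ {a b : V}, T.Walk a b → G
  | _, _, SimpleGraph.Walk.nil => 1
  | a, _, SimpleGraph.Walk.cons (v := c) _ p => h a c * walkProd h p

lemma walkProd_append {G V : Type} [Group G] {T : SimpleGraph V} (h : V → V → G)
    {a b c : V} (p : T.Walk a b) (q : T.Walk b c) :
    walkProd h (p.append q) = walkProd h p * walkProd h q := by
  induction p with
  | nil => simp [walkProd]
  | cons adj p ih => simp [walkProd, ih, mul_assoc]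

/-- Gauge fixing along a tree: if T is a tree on a finite vertex type V and h assigns
to every pair of adjacent vertices u, v an element h u v of a group G with
h v u = (h u v)⁻¹, then there is g : V → G with h u v = g u * (g v)⁻¹ on every edge. -/
theorem tree_gauge_fixing {G V : Type} [Group G] [Finite V]
    (T : SimpleGraph V) (hT : T.IsTree)
    (h : V → V → G) (hsym : ∀ u v : V, T.Adj u v → h v u = (h u v)⁻¹) :
    ∃ g : V → G, ∀ u v : V, T.Adj u v → h u v = g u * (g v)⁻¹ := by
  classical
  have hne : Nonempty V := hT.isConnected.nonempty
  obtain ⟨r⟩ := hne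
  choose P hP hPuniq using fun a b => hT.existsUnique_path a b
  -- key lemma: if a ~ c then walkProd (P a b) = h a c * walkProd (P c b)
  have key : ∀ a c b : V, T.Adj a c →
      walkProd h (P a b) = h a c * walkProd h (P c b) := by
    intro a c b adj
    by_cases hmem : a ∈ (P c b).support
    · -- a is on the path from c to b; it must be the second vertex
      have htake : (P c b).takeUntil a hmem = SimpleGraph.Walk.cons adj.symm SimpleGraph.Walk.nil := by
        refine (hT.existsUnique_path c a).unique ((hP c b).takeUntil hmem) ?_
        simp [SimpleGraph.Walk.isPath_def, adj.ne']
      have hdrop : P a b = (P c b).dropUntil a hmem :=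
        (hT.existsUnique_path a b).unique (hP a b) ((hP c b).dropUntil hmem) |>.symm ▸ rfl
      have hspec := SimpleGraph.Walk.take_spec (P c b) hmem
      have hPab : P a b = (P c b).dropUntil a hmem :=
        hPuniq a b ((P c b).dropUntil a hmem) ((hP c b).dropUntil hmem) ▸ rfl
      have : walkProd h (P c b) = h c a * walkProd h (P a b) := by
        conv_lhs => rw [← hspec]
        rw [walkProd_append, htake, hPab]
        simp [walkProd]
      rw [this, hsym a c adj]
      group
    · -- a is not on the path: prepend the edge
      have hcons : P a b = SimpleGraph.Walk.cons adj (P c b) := by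
        refine ((hT.existsUnique_path a b).unique (hP a b) ?_)
        rw [SimpleGraph.Walk.cons_isPath_iff]
        exact ⟨hP c b, hmem⟩
      rw [hcons]
      rfl
  refine ⟨fun v => walkProd h (P v r), ?_⟩
  intro u v adj
  have := key u v r adj
  simp only [this]
  group
end
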